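/- arXiv:2301.01724 — 2 statements merged into one kernel-verified Lean document; each statement's English description precedes it below -/
import Mathlib

section
/- Fix D ≥ 2, α ∈ (0,1), and suppose that for k = ⌊D/2⌋ we have α^D − α^{D-k-1} − α^k + 1 < 0. Then for every j with 1 ≤ j ≤ D−1, ∑_{i=1}^{j+1} α^{D-i} > ∑_{m=0}^{j-1} α^m. In particular, for every count c ∈ {0,...,D-1}, the minimum weighted sum over binary vectors with c+1 ones strictly exceeds the maximum weighted sum over binary vectors with c ones. -/
lemma aux_pow_balance (α : ℝ) (h0 : 0 < α) (h1 : α < 1) (a b d : ℕ) (hab : a ≤ b) :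
    α ^ (a + d) + α ^ b ≤ α ^ a + α ^ (b + d) := by
  have h2 : α ^ b ≤ α ^ a := pow_le_pow_of_le_one h0.le h1.le hab
  have h3 : α ^ d ≤ 1 := pow_le_one₀ h0.le h1.le
  have e1 : α ^ (a + d) = α ^ a * α ^ d := pow_add α a d
  have e2 : α ^ (b + d) = α ^ b * α ^ d := pow_add α b d
  nlinarith [mul_nonneg (sub_nonneg.2 h2) (sub_nonneg.2 h3)]

theorem stmt_11 (D : ℕ) (α : ℝ) (hD : 2 ≤ D) (hα : α ∈ Set.Ioo (0:ℝ) 1)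
    (hF : α ^ D - α ^ (D - D / 2 - 1) - α ^ (D / 2) + 1 < 0) :
    ∀ j, 1 ≤ j → j ≤ D - 1 →
      ∑ i ∈ Finset.Icc 1 (j + 1), α ^ (D - i) > ∑ m ∈ Finset.range j, α ^ m := by
  obtain ⟨h0, h1⟩ := hα
  intro j hj1 hj2
  set k := D / 2 with hk
  -- Key inequality: α^(D-1-j) + α^j > 1 + α^D
  have hkey : 1 + α ^ D < α ^ (D - 1 - j) + α ^ j := by
    have hFk : 1 + α ^ D < α ^ (D - k - 1) + α ^ k := by linarith
    rcases le_or_gt j (D - 1 - k) with hcase | hcase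
    · have h := aux_pow_balance α h0 h1 j k (D - 1 - k - j) (by omega)
      rw [show j + (D - 1 - k - j) = D - k - 1 by omega,
          show k + (D - 1 - k - j) = D - 1 - j by omega] at h
      linarith
    · have h := aux_pow_balance α h0 h1 (D - 1 - j) k (j - k) (by omega)
      rw [show D - 1 - j + (j - k) = D - k - 1 by omega,
          show k + (j - k) = j by omega] at h
      linarith
  -- Rewrite the left sum
  have hsum : ∑ i ∈ Finset.Icc 1 (j + 1), α ^ (D - i)
      = α ^ (D - 1 - j) * ∑ m ∈ Finset.range (j + 1), α ^ m := by
    rw [← Finset.Ico_add_one_right_eq_Icc, Finset.sum_Ico_eq_sum_range]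
    rw [show j + 1 + 1 - 1 = j + 1 by omega]
    rw [Finset.mul_sum, ← Finset.sum_range_reflect (fun m => α ^ (D - 1 - j) * α ^ m) (j + 1)]
    apply Finset.sum_congr rfl
    intro i hi
    have hi' : i ≤ j := by
      have := Finset.mem_range.mp hi; omega
    rw [← pow_add]
    congr 1
    omega
  rw [hsum, gt_iff_lt]
  have h1α : (0:ℝ) < 1 - α := by linarith
  have hS1 : (∑ m ∈ Finset.range (j + 1), α ^ m) * (α - 1) = α ^ (j + 1) - 1 :=
    geom_sum_mul α (j + 1)
  have hS2 : (∑ m ∈ Finset.range j, α ^ m) * (α - 1) = α ^ j - 1 := geom_sum_mul α j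
  have hX : α ^ (D - 1 - j) * α ^ (j + 1) = α ^ D := by
    rw [← pow_add]; congr 1; omega
  refine lt_of_mul_lt_mul_right ?_ h1α.le
  have e1 : α ^ (D - 1 - j) * (∑ m ∈ Finset.range (j + 1), α ^ m) * (1 - α)
      = α ^ (D - 1 - j) - α ^ D := by
    have h : α ^ (D - 1 - j) * (∑ m ∈ Finset.range (j + 1), α ^ m) * (1 - α)
        = -(α ^ (D - 1 - j) * ((∑ m ∈ Finset.range (j + 1), α ^ m) * (α - 1))) := by ring
    rw [h, hS1, mul_sub, hX]; ring
  have e2 : (∑ m ∈ Finset.range j, α ^ m) * (1 - α) = 1 - α ^ j := by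
    have h : (∑ m ∈ Finset.range j, α ^ m) * (1 - α)
        = -((∑ m ∈ Finset.range j, α ^ m) * (α - 1)) := by ring
    rw [h, hS2]; ring
  rw [e1, e2]
  linarith
end

section
/- Fix D ≥ 1, α ∈ (0,1), A > 0, and let c = ∑_{i=1}^{D} α^{D-i} x_i for some x ∈ {0,A}^D with c ≥ A. Then there exists an integer k with 1 ≤ k ≤ D such that A(1 + α + ... + α^{k-1}) ≤ c < A(1 + α + ... + α^{k-1}) + A·α^k (where the second inequality is interpreted as c ≤ A(1+...+α^{D-1}) when k = D). -/
theorem stmt_13 (D : ℕ) (α A c : ℝ) (hD : 1 ≤ D) (hα : α ∈ Set.Ioo (0:ℝ) 1) (hA : 0 < A)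
    (x : Fin D → ℝ) (hx : ∀ i, x i = 0 ∨ x i = A)
    (hc : c = ∑ i, α ^ (D - 1 - i.val) * x i) (hcA : A ≤ c) :
    ∃ k, 1 ≤ k ∧ k ≤ D ∧
      A * ∑ j ∈ Finset.range k, α ^ j ≤ c ∧
      (k < D → c < A * ∑ j ∈ Finset.range k, α ^ j + A * α ^ k) ∧
      (k = D → c ≤ A * ∑ j ∈ Finset.range D, α ^ j) := by
  classical
  set P : ℕ → Prop := fun k => A * ∑ j ∈ Finset.range k, α ^ j ≤ c with hP
  have hP1 : P 1 := by simpa [hP] using hcA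
  set k := Nat.findGreatest P D with hk
  have hkD : k ≤ D := Nat.findGreatest_le D
  have h1k : 1 ≤ k := Nat.le_findGreatest hD hP1
  have hPk : P k := Nat.findGreatest_spec hD hP1
  refine ⟨k, h1k, hkD, hPk, ?_, ?_⟩
  · intro hlt
    have h := Nat.findGreatest_is_greatest (P := P) (n := D) (k := k + 1) (by omega) (by omega)
    rw [hP] at h
    replace h := lt_of_not_ge h
    calc c < A * ∑ j ∈ Finset.range (k + 1), α ^ j := h
      _ = A * ∑ j ∈ Finset.range k, α ^ j + A * α ^ k := by
          rw [Finset.sum_range_succ]; ring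
  · intro _
    have hle : c ≤ ∑ i : Fin D, α ^ (D - 1 - i.val) * A := by
      rw [hc]
      refine Finset.sum_le_sum fun i _ => ?_
      have hxi : x i ≤ A := by rcases hx i with h | h <;> rw [h]; exact hA.le
      have : (0:ℝ) ≤ α ^ (D - 1 - i.val) := pow_nonneg hα.1.le _
      nlinarith
    have : (∑ i : Fin D, α ^ (D - 1 - i.val) * A) = A * ∑ j ∈ Finset.range D, α ^ j := by
      rw [Fin.sum_univ_eq_sum_range (fun i => α ^ (D - 1 - i) * A),
        Finset.mul_sum]
      rw [← Finset.sum_range_reflect (fun j => A * α ^ j) D]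
      exact Finset.sum_congr rfl fun j _ => by ring
    linarith [hle, this.le]
end
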